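/- arXiv:2206.04797 — 3 statements merged into one kernel-verified Lean document; each statement's English description precedes it below -/
import Mathlib

section
/- Let E and E' be finite-dimensional complex inner product spaces, A : E → E' complex-linear with adjoint A^*, λ > 0, α > 0, 0 < m < 1, and μ ≥ 0 with Re⟪A^*(A x), x⟫ ≥ μ‖x‖² for all x ∈ E. Let F : E → E be m-monotone and Lipschitz with constant (2 − m). Then the map T(x) = (id + αλ·A^*A)⁻¹(x − α·F(x)) is Lipschitz with constant L = √(1 − 2αm + α²(2 − m)²) / (1 + αλμ): for all x, y ∈ E, ‖T(x) − T(y)‖ ≤ L‖x − y‖. -/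
open scoped InnerProductSpace

/-- Contraction claim inside the paper's Proposition IV.2: the MOL map
`T(x) = (id + αλ A^*A)⁻¹ (x − α F x)` is Lipschitz with constant
`√(1 − 2αm + α²(2 − m)²)/(1 + αλμ)`. -/
theorem mol_map_lipschitz
    {E E' : Type*} [NormedAddCommGroup E] [InnerProductSpace ℂ E] [FiniteDimensional ℂ E]
    [NormedAddCommGroup E'] [InnerProductSpace ℂ E'] [FiniteDimensional ℂ E']
    (A : E →ₗ[ℂ] E') (lam α m μ : ℝ)
    (hlam : 0 < lam) (hα : 0 < α) (hm0 : 0 < m) (hm1 : m < 1) (hμ : 0 ≤ μ)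
    (hcoer : ∀ x : E, μ * ‖x‖ ^ 2 ≤ (⟪(LinearMap.adjoint A) (A x), x⟫_ℂ).re)
    (F : E → E)
    (hFmono : ∀ x y : E, m * ‖x - y‖ ^ 2 ≤ (⟪F x - F y, x - y⟫_ℂ).re)
    (hFlip : ∀ x y : E, ‖F x - F y‖ ≤ (2 - m) * ‖x - y‖)
    (T : E → E)
    (hT : T = fun x : E =>
      Function.invFun
        ⇑((LinearMap.id : E →ₗ[ℂ] E) +
            ((α * lam : ℝ) : ℂ) • ((LinearMap.adjoint A).comp A))
        (x - (α : ℂ) • F x)) :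
    ∀ x y : E,
      ‖T x - T y‖ ≤
        (Real.sqrt (1 - 2 * α * m + α ^ 2 * (2 - m) ^ 2) / (1 + α * lam * μ)) *
          ‖x - y‖ := by
  intro x y
  set c : ℝ := α * lam with hc
  have hcpos : 0 < c := mul_pos hα hlam
  set B : E →ₗ[ℂ] E :=
    (LinearMap.id : E →ₗ[ℂ] E) + ((c : ℝ) : ℂ) • ((LinearMap.adjoint A).comp A) with hB
  -- coercivity of B
  have hBre : ∀ z : E, (1 + c * μ) * ‖z‖ ^ 2 ≤ (⟪B z, z⟫_ℂ).re := by
    intro z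
    have hBz : B z = z + ((c : ℝ) : ℂ) • ((LinearMap.adjoint A) (A z)) := by
      simp [hB]
    have : (⟪B z, z⟫_ℂ).re = ‖z‖ ^ 2 + c * (⟪(LinearMap.adjoint A) (A z), z⟫_ℂ).re := by
      rw [hBz, inner_add_left, inner_smul_left]
      have hzz := inner_self_eq_norm_sq (𝕜 := ℂ) (x := z)
      simp only [Complex.add_re, Complex.mul_re, Complex.conj_re, Complex.conj_im,
        Complex.ofReal_re, Complex.ofReal_im] at *
      rw [RCLike.re_to_complex] at hzz
      rw [hzz]
      ring
    rw [this]
    have h1 := hcoer z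
    nlinarith [sq_nonneg ‖z‖]
  have hpos : 0 < 1 + c * μ := by nlinarith
  -- B injective hence bijective
  have hinj : Function.Injective B := by
    rw [← LinearMap.ker_eq_bot]
    ext z
    simp only [LinearMap.mem_ker, Submodule.mem_bot]
    constructor
    · intro hz
      have h := hBre z
      rw [hz] at h
      simp at h
      have : ‖z‖ ^ 2 ≤ 0 := by nlinarith
      have : ‖z‖ = 0 := by nlinarith [sq_nonneg ‖z‖, norm_nonneg z]
      simpa using this
    · intro hz; simp [hz]
  have hsurj : Function.Surjective B := (LinearMap.injective_iff_surjective).mp hinj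
  have hright : ∀ z : E, B (Function.invFun ⇑B z) = z :=
    Function.rightInverse_invFun hsurj
  -- lower bound on ‖B u‖
  have hlow : ∀ u : E, (1 + c * μ) * ‖u‖ ≤ ‖B u‖ := by
    intro u
    rcases eq_or_ne u 0 with rfl | hu
    · simp
    have hun : 0 < ‖u‖ := norm_pos_iff.mpr hu
    have h1 : (1 + c * μ) * ‖u‖ ^ 2 ≤ ‖B u‖ * ‖u‖ := by
      refine le_trans (hBre u) ?_
      have h2 : (⟪B u, u⟫_ℂ).re ≤ ‖⟪B u, u⟫_ℂ‖ := Complex.re_le_norm _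
      exact h2.trans (norm_inner_le_norm _ _)
    nlinarith
  -- main computation
  set v : E := x - y with hv
  set w : E := F x - F y with hw
  set K : ℝ := 1 - 2 * α * m + α ^ 2 * (2 - m) ^ 2 with hK
  have hKnn : 0 ≤ K := by nlinarith [sq_nonneg (1 - α * m), sq_nonneg (α * (2 - m)) , sq_nonneg α]
  have hBu : B (T x - T y) = v - (α : ℂ) • w := by
    rw [map_sub, hT]
    simp only [hright]
    rw [hv, hw, smul_sub]
    abel
  have hd2 : ‖v - (α : ℂ) • w‖ ^ 2 ≤ K * ‖v‖ ^ 2 := by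
    have hexp : ‖v - (α : ℂ) • w‖ ^ 2
        = ‖v‖ ^ 2 - 2 * α * (⟪w, v⟫_ℂ).re + α ^ 2 * ‖w‖ ^ 2 := by
      rw [@norm_sub_sq ℂ]
      rw [inner_smul_right]
      have : (⟪v, w⟫_ℂ).re = (⟪w, v⟫_ℂ).re := by
        rw [← inner_conj_symm w v, Complex.conj_re]
      simp [norm_smul, Complex.norm_real, abs_of_pos hα, this]
      ring
    rw [hexp]
    have h1 := hFmono x y
    have h2 := hFlip x y
    have h2' : ‖w‖ ^ 2 ≤ (2 - m) ^ 2 * ‖v‖ ^ 2 := by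
      have hwn : 0 ≤ ‖w‖ := norm_nonneg _
      nlinarith [norm_nonneg v]
    rw [hK]
    nlinarith [sq_nonneg α]
  have hd : ‖v - (α : ℂ) • w‖ ≤ Real.sqrt K * ‖v‖ := by
    have := Real.sqrt_le_sqrt hd2
    rwa [Real.sqrt_sq (norm_nonneg _), Real.sqrt_mul hKnn, Real.sqrt_sq (norm_nonneg _)] at this
  have hstep : (1 + c * μ) * ‖T x - T y‖ ≤ Real.sqrt K * ‖v‖ := by
    calc (1 + c * μ) * ‖T x - T y‖ ≤ ‖B (T x - T y)‖ := hlow _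
      _ = ‖v - (α : ℂ) • w‖ := by rw [hBu]
      _ ≤ Real.sqrt K * ‖v‖ := hd
  have : ‖T x - T y‖ ≤ Real.sqrt K * ‖v‖ / (1 + c * μ) := by
    rw [le_div_iff₀ hpos]
    linarith [hstep]
  calc ‖T x - T y‖ ≤ Real.sqrt K * ‖v‖ / (1 + c * μ) := this
    _ = Real.sqrt K / (1 + α * lam * μ) * ‖x - y‖ := by rw [hc, hv]; ring
end

section
/- Let E and E' be finite-dimensional complex inner product spaces, A : E → E' complex-linear with adjoint A^*, λ > 0, 0 < m < 1, 0 < α < 2m/(2 − m)², μ ≥ 0 with Re⟪A^*(A x), x⟫ ≥ μ‖x‖² for all x ∈ E, and F : E → E m-monotone and Lipschitz with constant (2 − m). Let z ∈ E, define T(x) = (id + αλ·A^*A)⁻¹(x − α·F(x)), and suppose x* ∈ E satisfies x* = T(x*) + z. Then the iterates x₀ ∈ E, x_{n+1} = T(x_n) + z satisfy ‖x_n − x*‖ ≤ Lⁿ‖x₀ − x*‖ for all n, where L = √(1 − 2αm + α²(2 − m)²) / (1 + αλμ) < 1; in particular x_n converges to x*. -/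
open scoped InnerProductSpace

set_option maxHeartbeats 1600000 in
/-- Paper's Proposition IV.2: the MOL iterates converge geometrically to the
fixed point `x*` with rate `L = √(1 − 2αm + α²(2 − m)²)/(1 + αλμ) < 1`. -/
theorem mol_iterates_converge
    {E E' : Type*} [NormedAddCommGroup E] [InnerProductSpace ℂ E] [FiniteDimensional ℂ E]
    [NormedAddCommGroup E'] [InnerProductSpace ℂ E'] [FiniteDimensional ℂ E']
    (A : E →ₗ[ℂ] E') (lam α m μ : ℝ)
    (hlam : 0 < lam) (hm0 : 0 < m) (hm1 : m < 1)
    (hα0 : 0 < α) (hα : α < 2 * m / (2 - m) ^ 2) (hμ : 0 ≤ μ)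
    (hcoer : ∀ x : E, μ * ‖x‖ ^ 2 ≤ (⟪(LinearMap.adjoint A) (A x), x⟫_ℂ).re)
    (F : E → E)
    (hFmono : ∀ x y : E, m * ‖x - y‖ ^ 2 ≤ (⟪F x - F y, x - y⟫_ℂ).re)
    (hFlip : ∀ x y : E, ‖F x - F y‖ ≤ (2 - m) * ‖x - y‖)
    (T : E → E)
    (hT : T = fun x : E =>
      Function.invFun
        ⇑((LinearMap.id : E →ₗ[ℂ] E) +
            ((α * lam : ℝ) : ℂ) • ((LinearMap.adjoint A).comp A))
        (x - (α : ℂ) • F x))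
    (z : E) (xstar : E) (hxstar : xstar = T xstar + z)
    (x : ℕ → E) (hiter : ∀ n : ℕ, x (n + 1) = T (x n) + z)
    (L : ℝ)
    (hL : L = Real.sqrt (1 - 2 * α * m + α ^ 2 * (2 - m) ^ 2) / (1 + α * lam * μ)) :
    L < 1 ∧
      (∀ n : ℕ, ‖x n - xstar‖ ≤ L ^ n * ‖x 0 - xstar‖) ∧
      Filter.Tendsto x Filter.atTop (nhds xstar) := by
  set B : E →ₗ[ℂ] E :=
    (LinearMap.id : E →ₗ[ℂ] E) + ((α * lam : ℝ) : ℂ) • ((LinearMap.adjoint A).comp A) with hB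
  set t : ℝ := 1 - 2 * α * m + α ^ 2 * (2 - m) ^ 2 with ht
  have hαlam : 0 < α * lam := mul_pos hα0 hlam
  have hden1 : (1 : ℝ) ≤ 1 + α * lam * μ := by nlinarith
  have hden0 : (0 : ℝ) < 1 + α * lam * μ := lt_of_lt_of_le one_pos hden1
  -- key coercivity estimate for B
  have hkey : ∀ u : E, (1 + α * lam * μ) * ‖u‖ ≤ ‖B u‖ := by
    intro u
    rcases eq_or_ne u 0 with h | h
    · simp [h]
    have hu : 0 < ‖u‖ := norm_pos_iff.mpr h
    have hRe : (1 + α * lam * μ) * ‖u‖ ^ 2 ≤ (⟪B u, u⟫_ℂ).re := by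
      have h1 := hcoer u
      have h2 : (⟪B u, u⟫_ℂ).re
          = (⟪u, u⟫_ℂ).re + (α * lam) * (⟪(LinearMap.adjoint A) (A u), u⟫_ℂ).re := by
        simp [hB, LinearMap.add_apply, LinearMap.smul_apply, inner_add_left, inner_smul_left]
        ring
      have h3 : (⟪u, u⟫_ℂ).re = ‖u‖ ^ 2 := by
        simpa using inner_self_eq_norm_sq (𝕜 := ℂ) u
      rw [h2, h3]
      nlinarith
    have h4 : (⟪B u, u⟫_ℂ).re ≤ ‖B u‖ * ‖u‖ := by
      simpa using re_inner_le_norm (𝕜 := ℂ) (B u) u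
    nlinarith
  have hinj : Function.Injective B := by
    intro u v huv
    have h := hkey (u - v)
    rw [map_sub, huv, sub_self, norm_zero] at h
    have h2 : ‖u - v‖ ≤ 0 := by nlinarith [norm_nonneg (u - v)]
    have : u - v = 0 := norm_le_zero_iff.mp h2
    exact sub_eq_zero.mp this
  have hsurj : Function.Surjective B := (LinearMap.injective_iff_surjective).mp hinj
  have hBinv : ∀ y : E, B (Function.invFun ⇑B y) = y := fun y =>
    Function.invFun_eq (hsurj y)
  -- positivity of t
  have ht0 : 0 < t := by
    rw [ht]
    nlinarith [sq_nonneg (1 - α * m),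
      mul_pos (mul_pos hα0 hα0) (show (0:ℝ) < 1 - m by linarith)]
  have htlt1 : t < 1 := by
    have h2m : 0 < (2 - m) ^ 2 := by nlinarith
    have h5 : α * (2 - m) ^ 2 < 2 * m := (lt_div_iff₀ h2m).mp hα
    rw [ht]
    nlinarith
  -- L bounds
  have hL0 : 0 ≤ L := by
    rw [hL]; positivity
  have hL1 : L < 1 := by
    have hst : Real.sqrt t < 1 := by
      rw [Real.sqrt_lt' one_pos]; simpa using htlt1
    rw [hL]
    calc Real.sqrt t / (1 + α * lam * μ) ≤ Real.sqrt t / 1 :=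
          div_le_div_of_nonneg_left (Real.sqrt_nonneg t) one_pos hden1
      _ = Real.sqrt t := by rw [div_one]
      _ < 1 := hst
  -- contraction estimate
  have hcontr : ∀ a b : E, ‖T a - T b‖ ≤ L * ‖a - b‖ := by
    intro a b
    set w : E := (a - b) - (α : ℂ) • (F a - F b) with hw
    have hBw : B (T a - T b) = w := by
      rw [hT]
      simp only
      rw [map_sub, hBinv, hBinv, hw]
      simp [smul_sub]
      abel
    have hw2 : ‖w‖ ^ 2 ≤ t * ‖a - b‖ ^ 2 := by
      have hexp : ‖w‖ ^ 2 = ‖a - b‖ ^ 2 - 2 * (⟪a - b, (α : ℂ) • (F a - F b)⟫_ℂ).re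
          + ‖(α : ℂ) • (F a - F b)‖ ^ 2 := by
        rw [hw]
        exact norm_sub_sq (𝕜 := ℂ) (a - b) ((α : ℂ) • (F a - F b))
      have hre : (⟪a - b, (α : ℂ) • (F a - F b)⟫_ℂ).re
          = α * (⟪F a - F b, a - b⟫_ℂ).re := by
        rw [inner_smul_right]
        have := inner_re_symm (𝕜 := ℂ) (a - b) (F a - F b)
        simp only [RCLike.re_to_complex] at this ⊢
        rw [Complex.mul_re]
        simp only [Complex.ofReal_re, Complex.ofReal_im, zero_mul, sub_zero, this]
      have hns : ‖(α : ℂ) • (F a - F b)‖ = α * ‖F a - F b‖ := by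
        rw [norm_smul]
        simp [abs_of_pos hα0]
      have hmono := hFmono a b
      have hlip := hFlip a b
      have hlip2 : ‖F a - F b‖ ^ 2 ≤ ((2 - m) * ‖a - b‖) ^ 2 := by
        have h2m : 0 ≤ (2 - m) * ‖a - b‖ := by
          have : 0 ≤ 2 - m := by linarith
          positivity
        nlinarith [norm_nonneg (F a - F b)]
      rw [hexp, hre, hns, ht]
      nlinarith [mul_le_mul_of_nonneg_left hmono hα0.le,
        mul_le_mul_of_nonneg_left hlip2 (sq_nonneg α)]
    have hwle : ‖w‖ ≤ Real.sqrt t * ‖a - b‖ := by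
      have h1 : ‖w‖ = Real.sqrt (‖w‖ ^ 2) := by
        rw [Real.sqrt_sq (norm_nonneg w)]
      rw [h1]
      calc Real.sqrt (‖w‖ ^ 2) ≤ Real.sqrt (t * ‖a - b‖ ^ 2) := Real.sqrt_le_sqrt hw2
        _ = Real.sqrt t * ‖a - b‖ := by
            rw [Real.sqrt_mul ht0.le, Real.sqrt_sq (norm_nonneg _)]
    have hk := hkey (T a - T b)
    rw [hBw] at hk
    rw [hL]
    rw [div_mul_eq_mul_div, le_div_iff₀ hden0]
    calc ‖T a - T b‖ * (1 + α * lam * μ) = (1 + α * lam * μ) * ‖T a - T b‖ := by ring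
      _ ≤ ‖w‖ := hk
      _ ≤ Real.sqrt t * ‖a - b‖ := hwle
  -- geometric bound by induction
  have hbound : ∀ n : ℕ, ‖x n - xstar‖ ≤ L ^ n * ‖x 0 - xstar‖ := by
    intro n
    induction n with
    | zero => simp
    | succ n ih =>
      have hstep : x (n + 1) - xstar = T (x n) - T xstar := by
        rw [hiter n]
        nth_rewrite 1 [hxstar]
        abel
      calc ‖x (n + 1) - xstar‖ = ‖T (x n) - T xstar‖ := by rw [hstep]
        _ ≤ L * ‖x n - xstar‖ := hcontr _ _
        _ ≤ L * (L ^ n * ‖x 0 - xstar‖) := mul_le_mul_of_nonneg_left ih hL0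
        _ = L ^ (n + 1) * ‖x 0 - xstar‖ := by ring
  refine ⟨hL1, hbound, ?_⟩
  rw [tendsto_iff_norm_sub_tendsto_zero]
  have hgeo : Filter.Tendsto (fun n : ℕ => L ^ n * ‖x 0 - xstar‖) Filter.atTop (nhds 0) := by
    have := (tendsto_pow_atTop_nhds_zero_of_lt_one hL0 hL1).mul_const ‖x 0 - xstar‖
    simpa using this
  exact squeeze_zero (fun n => norm_nonneg _) hbound hgeo
end

section
/- Let E and E' be finite-dimensional complex inner product spaces, A : E → E' complex-linear with adjoint A^*, λ > 0, 0 < m < 1, 0 < α < 2m/(2 − m)², μ ≥ 0 with Re⟪A^*(A x), x⟫ ≥ μ‖x‖² for all x ∈ E, and F : E → E m-monotone and Lipschitz with constant (2 − m). Define T(x) = (id + αλ·A^*A)⁻¹(x − α·F(x)) and Q = (id + αλ·A^*A)⁻¹. For w₁, w₂ ∈ E, let x₁*, x₂* ∈ E satisfy x_i* = T(x_i*) + αλ·Q(w_i) for i = 1, 2, and set δ = w₂ − w₁ and Δ = x₂* − x₁*. Then ‖Δ‖ ≤ (αλ/(1 + αλμ)) · (1 / (1 − √(1 − 2αm + α²(2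 − m)²))) · ‖δ‖. -/
open scoped InnerProductSpace

set_option maxHeartbeats 1000000 in
/-- Paper's Proposition IV.3: sensitivity of the MOL fixed point to input
perturbations. If `x_i* = T(x_i*) + αλ Q(w_i)` for `i = 1, 2`, then
`‖x₂* − x₁*‖ ≤ (αλ/(1 + αλμ)) (1/(1 − √(1 − 2αm + α²(2 − m)²))) ‖w₂ − w₁‖`. -/
theorem mol_fixed_point_robustness
    {E E' : Type*} [NormedAddCommGroup E] [InnerProductSpace ℂ E] [FiniteDimensional ℂ E]
    [NormedAddCommGroup E'] [InnerProductSpace ℂ E'] [FiniteDimensional ℂ E']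
    (A : E →ₗ[ℂ] E') (lam α m μ : ℝ)
    (hlam : 0 < lam) (hm0 : 0 < m) (hm1 : m < 1)
    (hα0 : 0 < α) (hα : α < 2 * m / (2 - m) ^ 2) (hμ : 0 ≤ μ)
    (hcoer : ∀ x : E, μ * ‖x‖ ^ 2 ≤ (⟪(LinearMap.adjoint A) (A x), x⟫_ℂ).re)
    (F : E → E)
    (hFmono : ∀ x y : E, m * ‖x - y‖ ^ 2 ≤ (⟪F x - F y, x - y⟫_ℂ).re)
    (hFlip : ∀ x y : E, ‖F x - F y‖ ≤ (2 - m) * ‖x - y‖)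
    (Q : E → E)
    (hQ : Q = Function.invFun
      ⇑((LinearMap.id : E →ₗ[ℂ] E) +
          ((α * lam : ℝ) : ℂ) • ((LinearMap.adjoint A).comp A)))
    (T : E → E)
    (hT : T = fun x : E => Q (x - (α : ℂ) • F x))
    (w₁ w₂ : E) (x₁ x₂ : E)
    (hx₁ : x₁ = T x₁ + ((α * lam : ℝ) : ℂ) • Q w₁)
    (hx₂ : x₂ = T x₂ + ((α * lam : ℝ) : ℂ) • Q w₂) :
    ‖x₂ - x₁‖ ≤
      (α * lam / (1 + α * lam * μ)) *
        (1 / (1 - Real.sqrt (1 - 2 * α * m + α ^ 2 * (2 - m) ^ 2))) *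
        ‖w₂ - w₁‖ := by
  set M : E →ₗ[ℂ] E := (LinearMap.id : E →ₗ[ℂ] E) +
      ((α * lam : ℝ) : ℂ) • ((LinearMap.adjoint A).comp A) with hM
  have hal : 0 < α * lam := mul_pos hα0 hlam
  have hden : (1:ℝ) ≤ 1 + α * lam * μ := by nlinarith
  -- coercivity of M
  have hcoerM : ∀ y : E, (1 + α * lam * μ) * ‖y‖ ^ 2 ≤ (⟪M y, y⟫_ℂ).re := by
    intro y
    have h1 : M y = y + ((α * lam : ℝ) : ℂ) • (LinearMap.adjoint A) (A y) := by
      simp [hM]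
    rw [h1, inner_add_left, inner_smul_left]
    have h2 : (starRingEnd ℂ) ((α * lam : ℝ) : ℂ) = ((α * lam : ℝ) : ℂ) := by
      simp
    rw [h2]
    have h3 : ((((α * lam : ℝ) : ℂ)) * ⟪(LinearMap.adjoint A) (A y), y⟫_ℂ).re
        = α * lam * (⟪(LinearMap.adjoint A) (A y), y⟫_ℂ).re := by
      simp [Complex.mul_re]
    have h4 : (⟪y, y⟫_ℂ).re = ‖y‖ ^ 2 := inner_self_eq_norm_sq (𝕜 := ℂ) y
    rw [Complex.add_re, h3, h4]
    have := hcoer y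
    nlinarith
  -- norm lower bound
  have hMnorm : ∀ y : E, (1 + α * lam * μ) * ‖y‖ ≤ ‖M y‖ := by
    intro y
    rcases eq_or_lt_of_le (norm_nonneg y) with h | h
    · simp [← h]
    · have h1 := hcoerM y
      have h2 : (⟪M y, y⟫_ℂ).re ≤ ‖M y‖ * ‖y‖ := re_inner_le_norm (𝕜 := ℂ) _ _
      have := h1.trans h2
      nlinarith
  have hMnorm' : ∀ y : E, ‖y‖ ≤ ‖M y‖ := by
    intro y
    have := hMnorm y
    nlinarith [norm_nonneg y]
  have hMinj : Function.Injective ⇑M := by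
    intro a b hab
    have : ‖a - b‖ ≤ ‖M (a - b)‖ := hMnorm' _
    rw [map_sub, hab, sub_self, norm_zero] at this
    exact sub_eq_zero.mp (norm_le_zero_iff.mp this)
  have hMsurj : Function.Surjective ⇑M :=
    (LinearMap.injective_iff_surjective).mp hMinj
  have hMQ : ∀ x : E, M (Q x) = x := by
    intro x
    rw [hQ]
    exact Function.rightInverse_invFun hMsurj x
  -- contraction factor
  set s : ℝ := 1 - 2 * α * m + α ^ 2 * (2 - m) ^ 2 with hs
  have hs0 : 0 ≤ s := by
    rw [hs]; nlinarith [sq_nonneg (1 - α * m), sq_nonneg α]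
  set q : ℝ := Real.sqrt s with hq
  have hq0 : 0 ≤ q := Real.sqrt_nonneg s
  have hs1 : s < 1 := by
    have h2m : (0:ℝ) < (2 - m) ^ 2 := by nlinarith
    rw [lt_div_iff₀ h2m] at hα
    rw [hs]; nlinarith
  have hq1 : q < 1 := by
    rw [hq, show (1:ℝ) = Real.sqrt 1 by simp]
    exact Real.sqrt_lt_sqrt hs0 (by simpa using hs1)
  -- Lipschitz bound for G x = x - α • F x
  have hG : ∀ x y : E, ‖(x - (α : ℂ) • F x) - (y - (α : ℂ) • F y)‖ ≤ q * ‖x - y‖ := by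
    intro x y
    set d := x - y with hd
    set f := F x - F y with hf
    have hre : (x - (α : ℂ) • F x) - (y - (α : ℂ) • F y) = d - (α : ℂ) • f := by
      rw [hd, hf, smul_sub]; abel
    rw [hre]
    have hexp : ‖d - (α : ℂ) • f‖ ^ 2
        = ‖d‖ ^ 2 - 2 * (⟪d, (α : ℂ) • f⟫_ℂ).re + ‖(α : ℂ) • f‖ ^ 2 :=
      norm_sub_sq (𝕜 := ℂ) d _
    have h1 : (⟪d, (α : ℂ) • f⟫_ℂ).re = α * (⟪f, d⟫_ℂ).re := by
      rw [inner_smul_right]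
      have : (⟪d, f⟫_ℂ).re = (⟪f, d⟫_ℂ).re := inner_re_symm (𝕜 := ℂ) d f
      simp [Complex.mul_re, this]
    have h2 : ‖(α : ℂ) • f‖ = α * ‖f‖ := by
      rw [norm_smul]; simp [abs_of_pos hα0]
    have h3 : m * ‖d‖ ^ 2 ≤ (⟪f, d⟫_ℂ).re := hFmono x y
    have h4 : ‖f‖ ≤ (2 - m) * ‖d‖ := hFlip x y
    have e2 : ‖f‖ ^ 2 ≤ ((2 - m) * ‖d‖) ^ 2 := by
      have := pow_le_pow_left₀ (norm_nonneg f) h4 2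
      simpa using this
    have e3 : α ^ 2 * ‖f‖ ^ 2 ≤ α ^ 2 * ((2 - m) * ‖d‖) ^ 2 :=
      mul_le_mul_of_nonneg_left e2 (sq_nonneg α)
    have e1 : α * (m * ‖d‖ ^ 2) ≤ α * (⟪f, d⟫_ℂ).re :=
      mul_le_mul_of_nonneg_left h3 hα0.le
    have hsq : ‖d - (α : ℂ) • f‖ ^ 2 ≤ s * ‖d‖ ^ 2 := by
      rw [hexp, h1, h2, hs]
      nlinarith [e1, e3]
    have := Real.sqrt_le_sqrt hsq
    rw [Real.sqrt_sq (norm_nonneg _)] at this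
    calc ‖d - (α : ℂ) • f‖ ≤ Real.sqrt (s * ‖d‖ ^ 2) := this
      _ = q * ‖d‖ := by
          rw [Real.sqrt_mul hs0, Real.sqrt_sq (norm_nonneg _)]
  -- equation for the difference
  have hΔ : x₂ - x₁ = (T x₂ - T x₁) + ((α * lam : ℝ) : ℂ) • (Q w₂ - Q w₁) := by
    conv_lhs => rw [hx₂, hx₁]
    rw [smul_sub]; abel
  -- bound ‖T x₂ - T x₁‖
  have hTbound : ‖T x₂ - T x₁‖ ≤ q * ‖x₂ - x₁‖ := by
    have h1 : ‖T x₂ - T x₁‖ ≤ ‖M (T x₂ - T x₁)‖ := hMnorm' _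
    have h2 : M (T x₂ - T x₁)
        = (x₂ - (α : ℂ) • F x₂) - (x₁ - (α : ℂ) • F x₁) := by
      rw [map_sub, hT]
      simp only [hMQ]
    rw [h2] at h1
    exact h1.trans (hG x₂ x₁)
  -- bound ‖Q w₂ - Q w₁‖
  have hQbound : (1 + α * lam * μ) * ‖Q w₂ - Q w₁‖ ≤ ‖w₂ - w₁‖ := by
    have h1 := hMnorm (Q w₂ - Q w₁)
    have h2 : M (Q w₂ - Q w₁) = w₂ - w₁ := by rw [map_sub, hMQ, hMQ]
    rwa [h2] at h1
  have hsmul : ‖((α * lam : ℝ) : ℂ) • (Q w₂ - Q w₁)‖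
      = (α * lam) * ‖Q w₂ - Q w₁‖ := by
    rw [norm_smul]; simp [abs_of_pos hα0, abs_of_pos hlam]
  have hmain : ‖x₂ - x₁‖ ≤ q * ‖x₂ - x₁‖ + (α * lam) * ‖Q w₂ - Q w₁‖ := by
    calc ‖x₂ - x₁‖ = ‖(T x₂ - T x₁) + ((α * lam : ℝ) : ℂ) • (Q w₂ - Q w₁)‖ := by
          rw [← hΔ]
      _ ≤ ‖T x₂ - T x₁‖ + ‖((α * lam : ℝ) : ℂ) • (Q w₂ - Q w₁)‖ := norm_add_le _ _
      _ ≤ q * ‖x₂ - x₁‖ + (α * lam) * ‖Q w₂ - Q w₁‖ := by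
          rw [hsmul]; exact add_le_add hTbound le_rfl
  have hdpos : (0:ℝ) < 1 + α * lam * μ := by linarith
  have h1q : (0:ℝ) < 1 - q := by linarith
  have k1 : (1 - q) * ‖x₂ - x₁‖ ≤ α * lam * ‖Q w₂ - Q w₁‖ := by nlinarith [hmain]
  have k2 : (1 - q) * ‖x₂ - x₁‖ * (1 + α * lam * μ) ≤ α * lam * ‖w₂ - w₁‖ := by
    calc (1 - q) * ‖x₂ - x₁‖ * (1 + α * lam * μ)
        ≤ (α * lam * ‖Q w₂ - Q w₁‖) * (1 + α * lam * μ) :=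
          mul_le_mul_of_nonneg_right k1 (by linarith)
      _ = α * lam * ((1 + α * lam * μ) * ‖Q w₂ - Q w₁‖) := by ring
      _ ≤ α * lam * ‖w₂ - w₁‖ := mul_le_mul_of_nonneg_left hQbound hal.le
  have hpos : (0:ℝ) < (1 + α * lam * μ) * (1 - q) := mul_pos hdpos h1q
  have hfinal : ‖x₂ - x₁‖ ≤ α * lam * ‖w₂ - w₁‖ / ((1 + α * lam * μ) * (1 - q)) := by
    rw [le_div_iff₀ hpos]
    nlinarith [k2]
  calc ‖x₂ - x₁‖ ≤ α * lam * ‖w₂ - w₁‖ / ((1 + α * lam * μ) * (1 - q)) := hfinal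
    _ = (α * lam / (1 + α * lam * μ)) * (1 / (1 - q)) * ‖w₂ - w₁‖ := by
        field_simp
end
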